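/- For every positive integer k and integer n, the number of integers l with 0 ≤ l < 2k satisfying (3l² + l)/2 ≡ −n (mod k) is at most 2·⌈2√k⌉ + 2; in particular it is O(k^{1/2}). -/

import Mathlib

open Filter


private def Scount (m : ℕ) (c : ℤ) : Finset ℕ :=
  (Finset.range m).filter fun x => (m : ℤ) ∣ 3 * (x : ℤ) ^ 2 + (x : ℤ) + c

private lemma mem_Scount {m : ℕ} {c : ℤ} {x : ℕ} :
    x ∈ Scount m c ↔ x < m ∧ (m : ℤ) ∣ 3 * (x : ℤ) ^ 2 + (x : ℤ) + c := by
  simp [Scount]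

private lemma poly_sub_dvd {A : ℤ} (x y c : ℤ) (h : A ∣ x - y) :
    A ∣ (3 * x ^ 2 + x + c) - (3 * y ^ 2 + y + c) := by
  have heq : (3 * x ^ 2 + x + c) - (3 * y ^ 2 + y + c) = (x - y) * (3 * (x + y) + 1) := by ring
  rw [heq]
  exact h.mul_right _

private lemma nat_eq_of_dvd {M : ℤ} {y₁ y₂ : ℕ} (h : M ∣ (y₁ : ℤ) - (y₂ : ℤ))
    (h₁ : (y₁ : ℤ) < M) (h₂ : (y₂ : ℤ) < M) : y₁ = y₂ := by
  have hmod : (y₂ : ℤ) % M = (y₁ : ℤ) % M := Int.modEq_iff_dvd.mpr h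
  rw [Int.emod_eq_of_lt (by positivity) h₂, Int.emod_eq_of_lt (by positivity) h₁] at hmod
  exact_mod_cast hmod.symm

private lemma card_le_of_pairwise_dvd {D t : ℕ} (hD : 0 < D) {S : Finset ℕ}
    (hS : S ⊆ Finset.range (D * t))
    (h : ∀ y₁ ∈ S, ∀ y₂ ∈ S, (D : ℤ) ∣ (y₁ : ℤ) - (y₂ : ℤ)) : S.card ≤ t := by
  have key : S.card ≤ (Finset.range t).card := by
    apply Finset.card_le_card_of_injOn (fun y => y / D)
    · intro y hy
      have hy' := hS hy
      simp only [Finset.mem_range] at hy' ⊢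
      simpa using Nat.div_lt_of_lt_mul hy'
    · intro y₁ h₁ y₂ h₂ hdiv
      have hdiv' : y₁ / D = y₂ / D := hdiv
      have hmod : y₁ % D = y₂ % D :=
        (Nat.modEq_iff_dvd.mpr (h y₁ h₁ y₂ h₂) : Nat.ModEq D y₂ y₁).symm
      have e₁ := Nat.div_add_mod y₁ D
      have e₂ := Nat.div_add_mod y₂ D
      rw [hdiv', hmod] at e₁
      omega
  simpa using key
private lemma Scount_card_mul {A B : ℕ} (hA : 0 < A) (hB : 0 < B)
    (hco : Nat.Coprime A B) (c : ℤ) :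
    (Scount (A * B) c).card ≤ (Scount A c).card * (Scount B c).card := by
  rw [← Finset.card_product]
  apply Finset.card_le_card_of_injOn (fun x => (x % A, x % B))
  · intro x hx
    rw [Finset.mem_coe, mem_Scount] at hx
    obtain ⟨hxlt, hdvd⟩ := hx
    have key : ∀ d : ℕ, 0 < d → d ∣ A * B → (x % d) ∈ Scount d c := by
      intro d hd hddvd
      rw [mem_Scount]
      refine ⟨Nat.mod_lt x hd, ?_⟩
      have hdZ : (d : ℤ) ∣ 3 * (x : ℤ) ^ 2 + (x : ℤ) + c :=
        dvd_trans (by exact_mod_cast hddvd) hdvd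
      have hsub : (d : ℤ) ∣ (x : ℤ) - ((x % d : ℕ) : ℤ) := by
        refine ⟨((x / d : ℕ) : ℤ), ?_⟩
        have h0 : (x : ℤ) = (d : ℤ) * ((x / d : ℕ) : ℤ) + ((x % d : ℕ) : ℤ) := by
          exact_mod_cast (Nat.div_add_mod x d).symm
        rw [h0]; ring
      have h2 := hdZ.sub (poly_sub_dvd (x : ℤ) ((x % d : ℕ) : ℤ) c hsub)
      rwa [sub_sub_cancel] at h2
    exact Finset.mem_product.mpr ⟨key A hA ⟨B, rfl⟩, key B hB ⟨A, Nat.mul_comm A B⟩⟩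
  · intro x₁ h₁ x₂ h₂ heq
    have hm1 : x₁ % A = x₂ % A := congrArg Prod.fst heq
    have hm2 : x₁ % B = x₂ % B := congrArg Prod.snd heq
    have hmm : x₁ ≡ x₂ [MOD A * B] :=
      (Nat.modEq_and_modEq_iff_modEq_mul hco).mp ⟨hm1, hm2⟩
    simp only [Finset.mem_coe, mem_Scount] at h₁ h₂
    have := hmm
    unfold Nat.ModEq at this
    rw [Nat.mod_eq_of_lt h₁.1, Nat.mod_eq_of_lt h₂.1] at this
    exact this

private lemma prime_pow_dvd_of_mul {p : ℤ} (hp : Prime p) {A B : ℤ} {e a : ℕ}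
    (h : p ^ e ∣ A * B) (hA : ¬ p ^ (a + 1) ∣ A) : p ^ (e - a) ∣ B := by
  induction a generalizing e A with
  | zero =>
    rw [pow_one] at hA
    simpa using hp.pow_dvd_of_dvd_mul_left e hA h
  | succ a ih =>
    by_cases hpA : p ∣ A
    · obtain ⟨A₁, rfl⟩ := hpA
      have hA₁ : ¬ p ^ (a + 1) ∣ A₁ := by
        intro hc
        exact hA (by rw [pow_succ']; exact mul_dvd_mul_left p hc)
      cases e with
      | zero => simpa using one_dvd B
      | succ e =>
        have h' : p ^ e ∣ A₁ * B := by
          have : p * p ^ e ∣ p * (A₁ * B) := by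
            rw [← pow_succ']
            calc p ^ (e + 1) ∣ p * A₁ * B := h
              _ = p * (A₁ * B) := by ring
          exact (mul_dvd_mul_iff_left hp.ne_zero).mp this
        have := ih h' hA₁
        simpa [Nat.succ_sub_succ] using this
    · have : p ^ e ∣ B := hp.pow_dvd_of_dvd_mul_left e hpA h
      exact dvd_trans (pow_dvd_pow p (Nat.sub_le e (a + 1))) this

private lemma Scount_two_pow (a : ℕ) (c : ℤ) : (Scount (2 ^ a) c).card ≤ 2 := by
  classical
  set S := Scount (2 ^ a) c with hS
  have main : ∀ y₁ ∈ S, ∀ y₂ ∈ S, y₁ % 2 = y₂ % 2 → y₁ = y₂ := by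
    intro y₁ h₁ y₂ h₂ hpar
    rw [mem_Scount] at h₁ h₂
    have hprod : ((2 : ℤ)) ^ a ∣ ((y₁ : ℤ) - y₂) * (3 * ((y₁ : ℤ) + y₂) + 1) := by
      have := h₁.2.sub h₂.2
      have heq : (3 * (y₁ : ℤ) ^ 2 + y₁ + c) - (3 * (y₂ : ℤ) ^ 2 + y₂ + c)
          = ((y₁ : ℤ) - y₂) * (3 * ((y₁ : ℤ) + y₂) + 1) := by ring
      rw [heq] at this
      exact_mod_cast this
    have hodd : ¬ (2 : ℤ) ∣ (3 * ((y₁ : ℤ) + y₂) + 1) := by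
      rintro ⟨w, hw⟩
      omega
    have hdvd : (2 : ℤ) ^ a ∣ (y₁ : ℤ) - y₂ := by
      have := prime_pow_dvd_of_mul Int.prime_two
        (a := 0) (by rw [mul_comm] at hprod; exact hprod) (by rwa [pow_one])
      simpa using this
    have hb₁ : (y₁ : ℤ) < (2 : ℤ) ^ a := by exact_mod_cast h₁.1
    have hb₂ : (y₂ : ℤ) < (2 : ℤ) ^ a := by exact_mod_cast h₂.1
    exact nat_eq_of_dvd hdvd hb₁ hb₂
  have hsplit : S = S.filter (fun y => y % 2 = 0) ∪ S.filter (fun y => ¬ y % 2 = 0) :=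
    (Finset.filter_union_filter_not_eq _ _).symm
  calc S.card = (S.filter (fun y => y % 2 = 0) ∪ S.filter (fun y => ¬ y % 2 = 0)).card := by
        rw [← hsplit]
    _ ≤ (S.filter (fun y => y % 2 = 0)).card + (S.filter (fun y => ¬ y % 2 = 0)).card :=
        Finset.card_union_le _ _
    _ ≤ 1 + 1 := by
        gcongr
        · exact Finset.card_le_one.mpr (fun y₁ hy₁ y₂ hy₂ => by
            simp only [Finset.mem_filter] at hy₁ hy₂
            exact main y₁ hy₁.1 y₂ hy₂.1 (by omega))
        · exact Finset.card_le_one.mpr (fun y₁ hy₁ y₂ hy₂ => by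
            simp only [Finset.mem_filter] at hy₁ hy₂
            exact main y₁ hy₁.1 y₂ hy₂.1 (by omega))
    _ = 2 := rfl

private lemma Scount_three_pow (b : ℕ) (c : ℤ) : (Scount (3 ^ b) c).card ≤ 1 := by
  apply Finset.card_le_one.mpr
  intro y₁ h₁ y₂ h₂
  rw [mem_Scount] at h₁ h₂
  have hprod : ((3 : ℤ)) ^ b ∣ ((y₁ : ℤ) - y₂) * (3 * ((y₁ : ℤ) + y₂) + 1) := by
    have := h₁.2.sub h₂.2
    have heq : (3 * (y₁ : ℤ) ^ 2 + y₁ + c) - (3 * (y₂ : ℤ) ^ 2 + y₂ + c)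
        = ((y₁ : ℤ) - y₂) * (3 * ((y₁ : ℤ) + y₂) + 1) := by ring
    rw [heq] at this
    exact_mod_cast this
  have hodd : ¬ (3 : ℤ) ∣ (3 * ((y₁ : ℤ) + y₂) + 1) := by
    rintro ⟨w, hw⟩
    omega
  have hdvd : (3 : ℤ) ^ b ∣ (y₁ : ℤ) - y₂ := by
    have := prime_pow_dvd_of_mul Int.prime_three
      (a := 0) (by rw [mul_comm] at hprod; exact hprod) (by rwa [pow_one])
    simpa using this
  have hb₁ : (y₁ : ℤ) < (3 : ℤ) ^ b := by exact_mod_cast h₁.1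
  have hb₂ : (y₂ : ℤ) < (3 : ℤ) ^ b := by exact_mod_cast h₂.1
  exact nat_eq_of_dvd hdvd hb₁ hb₂
private lemma Scount_prime_pow {p e : ℕ} (hp : p.Prime) (hp5 : 5 ≤ p) (he : 1 ≤ e) (c : ℤ) :
    (Scount (p ^ e) c).card ^ 2 ≤ p ^ e := by
  classical
  set S := Scount (p ^ e) c with hSdef
  have hpZ : Prime ((p : ℕ) : ℤ) := Nat.prime_iff_prime_int.mp hp
  have hSsub : S ⊆ Finset.range (p ^ e) := by
    intro y hy; rw [mem_Scount] at hy; exact Finset.mem_range.mpr hy.1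
  have hprod : ∀ y₁ ∈ S, ∀ y₂ ∈ S,
      ((p : ℤ)) ^ e ∣ ((y₁ : ℤ) - y₂) * (3 * ((y₁ : ℤ) + y₂) + 1) := by
    intro y₁ h₁ y₂ h₂
    rw [mem_Scount] at h₁ h₂
    have := h₁.2.sub h₂.2
    have heq : (3 * (y₁ : ℤ) ^ 2 + y₁ + c) - (3 * (y₂ : ℤ) ^ 2 + y₂ + c)
        = ((y₁ : ℤ) - y₂) * (3 * ((y₁ : ℤ) + y₂) + 1) := by ring
    rw [heq] at this
    exact_mod_cast this
  have hp6 : ¬ (p : ℤ) ∣ 6 := by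
    intro hdvd
    have h6 : p ∣ 6 := by exact_mod_cast hdvd
    have := Nat.le_of_dvd (by norm_num) h6
    interval_cases p
    · norm_num at h6
    · exact absurd hp (by norm_num)
  have hp3 : ¬ (p : ℤ) ∣ 3 := by
    intro hdvd
    have h3 : p ∣ 3 := by exact_mod_cast hdvd
    have := Nat.le_of_dvd (by norm_num) h3
    omega
  set h : ℕ := (e + 1) / 2 with hh
  by_cases hall : ∀ y ∈ S, ((p : ℤ)) ^ h ∣ (6 * (y : ℤ) + 1)
  · -- Case A : all solutions have 6y+1 divisible by p^h
    have hcard : S.card ≤ p ^ (e - h) := by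
      apply card_le_of_pairwise_dvd (D := p ^ h) (t := p ^ (e - h)) (pow_pos hp.pos h)
      · have : p ^ h * p ^ (e - h) = p ^ e := by rw [← pow_add]; congr 1; omega
        rwa [this]
      · intro y₁ h₁ y₂ h₂
        have hdvd6 : ((p : ℤ)) ^ h ∣ 6 * ((y₁ : ℤ) - y₂) := by
          have := (hall y₁ h₁).sub (hall y₂ h₂)
          have heq : (6 * (y₁ : ℤ) + 1) - (6 * (y₂ : ℤ) + 1) = 6 * ((y₁ : ℤ) - y₂) := by ring
          rwa [heq] at this
        have := hpZ.pow_dvd_of_dvd_mul_left h hp6 hdvd6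
        push_cast
        exact this
    calc S.card ^ 2 ≤ (p ^ (e - h)) ^ 2 := Nat.pow_le_pow_left hcard 2
      _ = p ^ (2 * (e - h)) := by rw [← pow_mul]; ring_nf
      _ ≤ p ^ e := Nat.pow_le_pow_right hp.pos (by omega)
  · -- Case B : some solution y₀ with p^h ∤ 6y₀+1
    push_neg at hall
    obtain ⟨y₀, hy₀S, hy₀⟩ := hall
    set N : ℕ := 6 * y₀ + 1 with hN
    have hNne : N ≠ 0 := by omega
    set a : ℕ := N.factorization p with ha
    have hadvd : p ^ a ∣ N := Nat.ordProj_dvd N p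
    have hand : ¬ p ^ (a + 1) ∣ N := Nat.pow_succ_factorization_not_dvd hNne hp
    have hah : a < h := by
      by_contra hcon
      push_neg at hcon
      apply hy₀
      have : ((p : ℤ)) ^ a ∣ (6 * (y₀ : ℤ) + 1) := by exact_mod_cast hadvd
      exact dvd_trans (pow_dvd_pow _ hcon) this
    have hae : 2 * a + 1 ≤ e := by omega
    -- the key dichotomy
    have hdich : ∀ y ∈ S, ((p : ℤ)) ^ (e - a) ∣ ((y : ℤ) - y₀) ∨
        ((p : ℤ)) ^ (e - a) ∣ (3 * ((y : ℤ) + y₀) + 1) := by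
      intro y hy
      have hAB := hprod y hy y₀ hy₀S
      by_cases hA1 : ((p : ℤ)) ^ (a + 1) ∣ ((y : ℤ) - y₀)
      · left
        have hB1 : ¬ ((p : ℤ)) ^ (a + 1) ∣ (3 * ((y : ℤ) + y₀) + 1) := by
          intro hc
          apply hand
          have : ((p : ℤ)) ^ (a + 1) ∣ ((N : ℕ) : ℤ) := by
            have heq : ((N : ℕ) : ℤ) = (3 * ((y : ℤ) + y₀) + 1) - 3 * ((y : ℤ) - y₀) := by
              push_cast [hN]; ring
            rw [heq]
            exact hc.sub (dvd_mul_of_dvd_right hA1 3)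
          exact_mod_cast this
        have := prime_pow_dvd_of_mul hpZ (by rw [mul_comm] at hAB; exact hAB) hB1
        exact this
      · right
        exact prime_pow_dvd_of_mul hpZ hAB hA1
    have hsub1 : (S.filter (fun y : ℕ => ((p : ℤ)) ^ (e - a) ∣ ((y : ℤ) - (y₀ : ℤ)))).card ≤ p ^ a := by
      apply card_le_of_pairwise_dvd (D := p ^ (e - a)) (t := p ^ a) (pow_pos hp.pos _)
      · have : p ^ (e - a) * p ^ a = p ^ e := by rw [← pow_add]; congr 1; omega
        rw [this]
        exact subset_trans (Finset.filter_subset _ _) hSsub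
      · intro y₁ h₁ y₂ h₂
        simp only [Finset.mem_filter] at h₁ h₂
        have := h₁.2.sub h₂.2
        have heq : ((y₁ : ℤ) - y₀) - ((y₂ : ℤ) - y₀) = (y₁ : ℤ) - y₂ := by ring
        rw [heq] at this
        push_cast
        exact this
    have hsub2 : (S.filter (fun y : ℕ => ((p : ℤ)) ^ (e - a) ∣ (3 * ((y : ℤ) + (y₀ : ℤ)) + 1))).card
        ≤ p ^ a := by
      apply card_le_of_pairwise_dvd (D := p ^ (e - a)) (t := p ^ a) (pow_pos hp.pos _)
      · have : p ^ (e - a) * p ^ a = p ^ e := by rw [← pow_add]; congr 1; omega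
        rw [this]
        exact subset_trans (Finset.filter_subset _ _) hSsub
      · intro y₁ h₁ y₂ h₂
        simp only [Finset.mem_filter] at h₁ h₂
        have hdvd3 : ((p : ℤ)) ^ (e - a) ∣ 3 * ((y₁ : ℤ) - y₂) := by
          have := h₁.2.sub h₂.2
          have heq : (3 * ((y₁ : ℤ) + y₀) + 1) - (3 * ((y₂ : ℤ) + y₀) + 1)
              = 3 * ((y₁ : ℤ) - y₂) := by ring
          rwa [heq] at this
        have := hpZ.pow_dvd_of_dvd_mul_left (e - a) hp3 hdvd3
        push_cast
        exact this
    have hcard : S.card ≤ 2 * p ^ a := by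
      have hsplit : S ⊆ S.filter (fun y : ℕ => ((p : ℤ)) ^ (e - a) ∣ ((y : ℤ) - (y₀ : ℤ))) ∪
          S.filter (fun y : ℕ => ((p : ℤ)) ^ (e - a) ∣ (3 * ((y : ℤ) + (y₀ : ℤ)) + 1)) := by
        intro y hy
        rcases hdich y hy with hl | hr
        · exact Finset.mem_union_left _ (Finset.mem_filter.mpr ⟨hy, hl⟩)
        · exact Finset.mem_union_right _ (Finset.mem_filter.mpr ⟨hy, hr⟩)
      calc S.card ≤ _ := Finset.card_le_card hsplit
        _ ≤ _ := Finset.card_union_le _ _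
        _ ≤ p ^ a + p ^ a := Nat.add_le_add hsub1 hsub2
        _ = 2 * p ^ a := by ring
    calc S.card ^ 2 ≤ (2 * p ^ a) ^ 2 := Nat.pow_le_pow_left hcard 2
      _ = 4 * p ^ (2 * a) := by rw [mul_pow, ← pow_mul]; ring_nf
      _ ≤ p ^ (2 * a + 1) := by
          rw [pow_succ]
          rw [mul_comm (p ^ (2 * a)) p]
          exact Nat.mul_le_mul_right _ (by omega)
      _ ≤ p ^ e := Nat.pow_le_pow_right hp.pos hae
private lemma Scount_odd {m : ℕ} (hm : 0 < m) (hodd : m % 2 = 1) (c : ℤ) :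
    (Scount m c).card ^ 2 ≤ m := by
  induction m using Nat.strong_induction_on with
  | _ m ih =>
  rcases eq_or_lt_of_le (Nat.one_le_iff_ne_zero.mpr hm.ne') with h1 | h1
  · -- m = 1
    have hsub : Scount m c ⊆ Finset.range m := fun y hy => Finset.mem_range.mpr (mem_Scount.mp hy).1
    have := Finset.card_le_card hsub
    rw [Finset.card_range] at this
    calc (Scount m c).card ^ 2 ≤ m ^ 2 := Nat.pow_le_pow_left this 2
      _ = 1 := by rw [← h1]
      _ ≤ m := hm
  · -- m > 1
    set p := m.minFac with hpdef
    have hp : p.Prime := Nat.minFac_prime (by omega)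
    have hpdvd : p ∣ m := Nat.minFac_dvd m
    have hp2 : p ≠ 2 := by
      intro hc
      rw [hc] at hpdvd
      omega
    set e := m.factorization p with he
    have hepos : 0 < e := hp.factorization_pos_of_dvd (by omega) hpdvd
    set m' := m / p ^ e with hm'
    have hmeq : p ^ e * m' = m := Nat.ordProj_mul_ordCompl_eq_self m p
    have hm'dvd : m' ∣ m := Nat.ordCompl_dvd m p
    have hm'pos : 0 < m' := Nat.ordCompl_pos p (by omega)
    have hm'odd : m' % 2 = 1 := by
      rcases Nat.even_or_odd m' with hev | hod
      · obtain ⟨t, ht⟩ := hev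
        have h2m' : 2 ∣ m' := ⟨t, by omega⟩
        have : 2 ∣ m := dvd_trans h2m' hm'dvd
        omega
      · obtain ⟨t, ht⟩ := hod
        omega
    have hppos : 1 < p ^ e := by
      calc 1 < p := hp.one_lt
        _ = p ^ 1 := (pow_one p).symm
        _ ≤ p ^ e := Nat.pow_le_pow_right hp.pos hepos
    have hm'lt : m' < m := by
      rcases eq_or_lt_of_le (Nat.le_of_dvd hm hm'dvd) with hh | hh
      · exfalso
        rw [hh] at hmeq
        nlinarith
      · exact hh
    have hco : Nat.Coprime (p ^ e) m' := (Nat.coprime_ordCompl hp (by omega)).pow_left e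
    have hcardmul : (Scount m c).card ≤ (Scount (p ^ e) c).card * (Scount m' c).card := by
      have := Scount_card_mul (A := p ^ e) (B := m') (by omega) hm'pos hco c
      rwa [hmeq] at this
    have hA : (Scount (p ^ e) c).card ^ 2 ≤ p ^ e := by
      have hp3or5 : p = 3 ∨ 5 ≤ p := by
        have h2 := hp.two_le
        by_cases hc4 : p = 4
        · exact absurd hp (by rw [hc4]; norm_num)
        · omega
      rcases hp3or5 with h3 | h5
      · have := Scount_three_pow e c
        rw [← h3] at this
        calc (Scount (p ^ e) c).card ^ 2 ≤ 1 ^ 2 := Nat.pow_le_pow_left this 2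
          _ ≤ p ^ e := by simpa using hppos.le
      · exact Scount_prime_pow hp h5 hepos c
    have hB : (Scount m' c).card ^ 2 ≤ m' := ih m' hm'lt hm'pos hm'odd
    calc (Scount m c).card ^ 2 ≤ ((Scount (p ^ e) c).card * (Scount m' c).card) ^ 2 :=
          Nat.pow_le_pow_left hcardmul 2
      _ = (Scount (p ^ e) c).card ^ 2 * (Scount m' c).card ^ 2 := by ring
      _ ≤ p ^ e * m' := Nat.mul_le_mul hA hB
      _ = m := hmeq
private lemma cond_iff (k l : ℕ) (n : ℤ) :
    ((3 * (l : ℤ) ^ 2 + l) / 2 ≡ -n [ZMOD (k : ℤ)]) ↔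
      ((2 * k : ℕ) : ℤ) ∣ 3 * (l : ℤ) ^ 2 + (l : ℤ) + 2 * n := by
  have heven : Even (3 * (l : ℤ) ^ 2 + l) := by
    have h1 : Even ((l : ℤ) * (l + 1)) := Int.even_mul_succ_self l
    have heq : 3 * (l : ℤ) ^ 2 + l = (l : ℤ) * (l + 1) + 2 * l ^ 2 := by ring
    rw [heq]
    exact h1.add (even_two_mul _)
  obtain ⟨t, ht⟩ := heven
  have hdiv : (3 * (l : ℤ) ^ 2 + l) / 2 = t := by omega
  rw [Int.modEq_iff_dvd, hdiv]
  constructor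
  · rintro ⟨w, hw⟩
    -- hw : -n - t = k * w
    refine ⟨-w, ?_⟩
    have h2 : 3 * (l : ℤ) ^ 2 + l + 2 * n = 2 * (t + n) := by omega
    rw [h2]
    push_cast
    have : t + n = (k : ℤ) * (-w) := by rw [mul_neg]; linarith
    rw [this]
    ring
  · rintro ⟨w, hw⟩
    refine ⟨-w, ?_⟩
    have h2 : 3 * (l : ℤ) ^ 2 + l + 2 * n = 2 * (t + n) := by omega
    rw [h2] at hw
    push_cast at hw
    -- hw : 2 * (t + n) = 2 * k * w
    have h3 : t + n = (k : ℤ) * w := by linarith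
    have : -n - t = (k : ℤ) * (-w) := by rw [mul_neg, ← h3]; ring
    exact this

private lemma main_card_bound (k : ℕ) (hk : 0 < k) (c : ℤ) :
    (Scount (2 * k) c).card ^ 2 ≤ 4 * k := by
  have h2k : 2 * k ≠ 0 := by omega
  set a := (2 * k).factorization 2 with ha
  have hapos : 0 < a := Nat.Prime.factorization_pos_of_dvd Nat.prime_two h2k ⟨k, rfl⟩
  set m' := (2 * k) / 2 ^ a with hm'
  have hmeq : 2 ^ a * m' = 2 * k := Nat.ordProj_mul_ordCompl_eq_self (2 * k) 2
  have hm'pos : 0 < m' := Nat.ordCompl_pos 2 h2k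
  have hm'odd : m' % 2 = 1 := by
    have hnd : ¬ 2 ∣ m' := Nat.not_dvd_ordCompl Nat.prime_two h2k
    omega
  have hco : Nat.Coprime (2 ^ a) m' := (Nat.coprime_ordCompl Nat.prime_two h2k).pow_left a
  have hcardmul : (Scount (2 * k) c).card ≤ (Scount (2 ^ a) c).card * (Scount m' c).card := by
    have := Scount_card_mul (A := 2 ^ a) (B := m') (Nat.pow_pos (by norm_num)) hm'pos hco c
    rwa [hmeq] at this
  have h2b := Scount_two_pow a c
  have hodd := Scount_odd hm'pos hm'odd c
  have hm'k : m' ≤ k := by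
    have h2a : 2 ≤ 2 ^ a := by
      calc 2 = 2 ^ 1 := rfl
        _ ≤ 2 ^ a := Nat.pow_le_pow_right (by norm_num) hapos
    nlinarith
  calc (Scount (2 * k) c).card ^ 2
      ≤ ((Scount (2 ^ a) c).card * (Scount m' c).card) ^ 2 := Nat.pow_le_pow_left hcardmul 2
    _ = (Scount (2 ^ a) c).card ^ 2 * (Scount m' c).card ^ 2 := by ring
    _ ≤ 2 ^ 2 * m' := Nat.mul_le_mul (Nat.pow_le_pow_left h2b 2) hodd
    _ = 4 * m' := by norm_num
    _ ≤ 4 * k := by omega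

private lemma final_bound (k : ℕ) (hk : 0 < k) (n : ℤ) :
    ((Finset.range (2 * k)).filter fun l : ℕ =>
        ((3 * (l : ℤ) ^ 2 + l) / 2) ≡ -n [ZMOD (k : ℤ)]).card ≤ ⌈2 * Real.sqrt k⌉₊ := by
  classical
  have hset : ((Finset.range (2 * k)).filter fun l : ℕ =>
      ((3 * (l : ℤ) ^ 2 + l) / 2) ≡ -n [ZMOD (k : ℤ)]) = Scount (2 * k) (2 * n) := by
    apply Finset.filter_congr
    intro l _
    simpa using cond_iff k l n
  rw [hset]
  have hsq := main_card_bound k hk (2 * n)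
  set N := (Scount (2 * k) (2 * n)).card with hNdef
  have hreal : (N : ℝ) ≤ 2 * Real.sqrt k := by
    have h1 : ((N : ℝ)) ^ 2 ≤ 4 * (k : ℝ) := by exact_mod_cast hsq
    have h2 : (2 * Real.sqrt k) ^ 2 = 4 * (k : ℝ) := by
      rw [mul_pow, Real.sq_sqrt (by positivity)]
      ring
    nlinarith [Real.sqrt_nonneg (k : ℝ), Nat.cast_nonneg (α := ℝ) N]
  have := le_trans hreal (Nat.le_ceil _)
  exact_mod_cast this
theorem pentagonal_congruence_solution_count :
    (∀ k : ℕ, 0 < k → ∀ n : ℤ,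
      ((Finset.range (2 * k)).filter fun l : ℕ =>
          ((3 * (l : ℤ) ^ 2 + l) / 2) ≡ -n [ZMOD (k : ℤ)]).card ≤
        2 * ⌈2 * Real.sqrt k⌉₊ + 2) ∧
    ∀ n : ℤ,
      (fun k : ℕ => (((Finset.range (2 * k)).filter fun l : ℕ =>
          ((3 * (l : ℤ) ^ 2 + l) / 2) ≡ -n [ZMOD (k : ℤ)]).card : ℝ)) =O[atTop]
        fun k : ℕ => Real.sqrt k := by
  constructor
  · intro k hk n
    have := final_bound k hk n
    omega
  · intro n
    rw [Asymptotics.isBigO_iff]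
    refine ⟨8, ?_⟩
    filter_upwards [Filter.eventually_ge_atTop 1] with k hk
    have hb := final_bound k (by omega) n
    have hsqrt1 : (1 : ℝ) ≤ Real.sqrt k := by
      rw [show (1 : ℝ) = Real.sqrt 1 by simp]
      exact Real.sqrt_le_sqrt (by exact_mod_cast hk)
    have hceil : (⌈2 * Real.sqrt k⌉₊ : ℝ) < 2 * Real.sqrt k + 1 :=
      Nat.ceil_lt_add_one (by positivity)
    have hcard : ((((Finset.range (2 * k)).filter fun l : ℕ =>
        ((3 * (l : ℤ) ^ 2 + l) / 2) ≡ -n [ZMOD (k : ℤ)]).card : ℝ))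
        ≤ (⌈2 * Real.sqrt k⌉₊ : ℝ) := by exact_mod_cast hb
    rw [Real.norm_natCast, Real.norm_of_nonneg (Real.sqrt_nonneg _)]
    calc ((((Finset.range (2 * k)).filter fun l : ℕ =>
        ((3 * (l : ℤ) ^ 2 + l) / 2) ≡ -n [ZMOD (k : ℤ)]).card : ℝ))
        ≤ (⌈2 * Real.sqrt k⌉₊ : ℝ) := hcard
      _ ≤ 2 * Real.sqrt k + 1 := hceil.le
      _ ≤ 8 * Real.sqrt k := by linarith
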